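/- Let φ ∈ ℝ be a fixed parameter. For each integer n define on the open set Ω = {(t,x) ∈ ℝ² : x ≠ 0} the vector field L_n = e^{-nt+(n−1)x} (e^{x} − 1)^{−(n+2)} [ (−1 + Σ_{j=1}^{|n|−1} (2j+1)) n + (2n+1) e^{x} − (n+2) e^{2x} + e^{3x} + sgn(n) (φ/2) Σ_{j=1}^{|n|−1} j(j+1) ] ∂_t + e^{-nt+(n−1)x} (e^{x} − 1)^{−(n+1)} [ −(−1 + Σ_{j=1}^{|n|−1} (2j+1)) n − 2n e^{x} + n e^{2x} − sgn(n) (φ/2) Σ_{j=1}^{|n|−1} j(j+1) ] ∂_x, where the sums are empty (equal to 0) when |n| ≤ 1 and the exponents −(n+2), −(n+1) are integer powers. Then for all integers m, n one has [L_m, L_n] = (m − n) L_{m+n} at every point of Ω. (Realization 𝔚₉ of the Witt algebra from Theorem 1, with φ constant.) -/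

import Mathlib

noncomputable section

/-- Partial derivative of `f : ℝ² → ℝ` (curried) in the first variable `t`. -/
def qt (f : ℝ → ℝ → ℝ) (t x : ℝ) : ℝ := deriv (fun s => f s x) t

/-- Partial derivative in the second variable `x`. -/
def qx (f : ℝ → ℝ → ℝ) (t x : ℝ) : ℝ := deriv (fun s => f t s) x

/-- A vector field `τ ∂_t + ξ ∂_x` on ℝ² with coordinates `(t,x)`. -/
structure VF2 where
  tau : ℝ → ℝ → ℝ
  xi  : ℝ → ℝ → ℝ

/-- Action of a vector field on a function: `X(F) = τ F_t + ξ F_x`. -/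
def VF2.app (X : VF2) (F : ℝ → ℝ → ℝ) (t x : ℝ) : ℝ :=
  X.tau t x * qt F t x + X.xi t x * qx F t x

/-- Lie bracket of vector fields on ℝ². -/
def VF2.bracket (X Y : VF2) : VF2 where
  tau := fun t x => X.app Y.tau t x - Y.app X.tau t x
  xi  := fun t x => X.app Y.xi t x - Y.app X.xi t x

/-- Scalar multiple of a vector field. -/
def VF2.smul (c : ℝ) (X : VF2) : VF2 where
  tau := fun t x => c * X.tau t x
  xi  := fun t x => c * X.xi t x

/-- `Σ_{j=1}^{|n|-1} (2j+1)` (the empty sum `0` when `|n| ≤ 1`). -/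
def S1 (n : ℤ) : ℝ := ∑ j ∈ Finset.Icc 1 (n.natAbs - 1), (2 * (j : ℝ) + 1)

/-- `Σ_{j=1}^{|n|-1} j(j+1)` (the empty sum `0` when `|n| ≤ 1`). -/
def S2 (n : ℤ) : ℝ := ∑ j ∈ Finset.Icc 1 (n.natAbs - 1), ((j : ℝ) * ((j : ℝ) + 1))

/-- The vector fields of the realization 𝔚₉ (with constant parameter `φ`),
defined on `Ω = {(t,x) : x ≠ 0}`. -/
def W9 (φ : ℝ) (n : ℤ) : VF2 where
  tau := fun t x => Real.exp (-(n : ℝ) * t + ((n : ℝ) - 1) * x) *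
    (Real.exp x - 1) ^ (-(n + 2) : ℤ) *
    ((-1 + S1 n) * (n : ℝ) + (2 * (n : ℝ) + 1) * Real.exp x
      - ((n : ℝ) + 2) * Real.exp (2 * x) + Real.exp (3 * x)
      + (Int.sign n : ℝ) * (φ / 2) * S2 n)
  xi  := fun t x => Real.exp (-(n : ℝ) * t + ((n : ℝ) - 1) * x) *
    (Real.exp x - 1) ^ (-(n + 1) : ℤ) *
    (-((-1 + S1 n) * (n : ℝ)) - 2 * (n : ℝ) * Real.exp x
      + (n : ℝ) * Real.exp (2 * x)
      - (Int.sign n : ℝ) * (φ / 2) * S2 n)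

-- sums
lemma sum1 (k : ℕ) : ∑ j ∈ Finset.Icc 1 k, (2 * (j : ℝ) + 1) = (k : ℝ) ^ 2 + 2 * k := by
  induction k with
  | zero => simp
  | succ k ih =>
    rw [Finset.sum_Icc_succ_top (by omega), ih]
    push_cast; ring

lemma sum2 (k : ℕ) : ∑ j ∈ Finset.Icc 1 k, ((j : ℝ) * ((j : ℝ) + 1))
    = ((k : ℝ) ^ 3 + 3 * (k : ℝ) ^ 2 + 2 * k) / 3 := by
  induction k with
  | zero => simp
  | succ k ih =>
    rw [Finset.sum_Icc_succ_top (by omega), ih]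
    push_cast; ring

lemma S1_eq (n : ℤ) : (-1 + S1 n) * (n : ℝ) = (n : ℝ) ^ 3 - 2 * (n : ℝ) := by
  rcases eq_or_ne n 0 with h | h
  · subst h; simp
  · have h1 : 1 ≤ n.natAbs := by omega
    have hs : S1 n = ((n.natAbs - 1 : ℕ) : ℝ) ^ 2 + 2 * ((n.natAbs - 1 : ℕ) : ℝ) := sum1 _
    have hc : ((n.natAbs - 1 : ℕ) : ℝ) = (n.natAbs : ℝ) - 1 := by
      push_cast [h1]; ring
    have habs : ((n.natAbs : ℝ)) ^ 2 = (n : ℝ) ^ 2 := by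
      rw [Nat.cast_natAbs]; exact_mod_cast sq_abs (n : ℤ)
    rw [hs, hc]
    linear_combination (n : ℝ) * habs

lemma S2_eq (φ : ℝ) (n : ℤ) :
    (Int.sign n : ℝ) * (φ / 2) * S2 n = φ * ((n : ℝ) ^ 3 - (n : ℝ)) / 6 := by
  rcases eq_or_ne n 0 with h | h
  · subst h; simp
  · have h1 : 1 ≤ n.natAbs := by omega
    have hs : S2 n = (((n.natAbs - 1 : ℕ) : ℝ) ^ 3 + 3 * ((n.natAbs - 1 : ℕ) : ℝ) ^ 2
        + 2 * ((n.natAbs - 1 : ℕ) : ℝ)) / 3 := sum2 _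
    have hc : ((n.natAbs - 1 : ℕ) : ℝ) = (n.natAbs : ℝ) - 1 := by
      push_cast [h1]; ring
    have habs : ((n.natAbs : ℝ)) ^ 2 = (n : ℝ) ^ 2 := by
      rw [Nat.cast_natAbs]; exact_mod_cast sq_abs (n : ℤ)
    have hsign : (Int.sign n : ℝ) * (n.natAbs : ℝ) = (n : ℝ) := by
      rw [Nat.cast_natAbs]; exact_mod_cast Int.sign_mul_abs n
    rw [hs, hc]
    linear_combination (φ * ((n.natAbs : ℝ)) ^ 2 / 6) * hsign + (φ * (n : ℝ) / 6) * habs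
      - (φ / 6) * hsign

-- derivative helpers
lemma zpow_split (w : ℝ) (hw : w ≠ 0) (a b : ℤ) (c : ℕ) (h : a = b + c) :
    w ^ a = w ^ b * w ^ c := by
  subst h; rw [zpow_add₀ hw, zpow_natCast]

lemma zpow_split2 (w : ℝ) (hw : w ≠ 0) (a b c : ℤ) (d : ℕ) (h : a = b + c + d) :
    w ^ a = w ^ b * w ^ c * w ^ d := by
  subst h; rw [zpow_add₀ hw, zpow_add₀ hw, zpow_natCast]

lemma hasDerivAt_shape (a b : ℝ) (k : ℤ) (c0 c1 c2 c3 : ℝ) (x : ℝ)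
    (hw : Real.exp x - 1 ≠ 0) :
    HasDerivAt (fun s : ℝ => Real.exp (a + b * s) * (Real.exp s - 1) ^ k *
        (c0 + c1 * Real.exp s + c2 * Real.exp (2 * s) + c3 * Real.exp (3 * s)))
      (Real.exp (a + b * x) * (Real.exp x - 1) ^ (k - 1) *
        (b * (Real.exp x - 1) *
            (c0 + c1 * Real.exp x + c2 * Real.exp (2 * x) + c3 * Real.exp (3 * x))
          + (k : ℝ) * Real.exp x *
            (c0 + c1 * Real.exp x + c2 * Real.exp (2 * x) + c3 * Real.exp (3 * x))
          + (Real.exp x - 1) *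
            (c1 * Real.exp x + 2 * c2 * Real.exp (2 * x) + 3 * c3 * Real.exp (3 * x)))) x := by
  have h1 : HasDerivAt (fun s : ℝ => Real.exp (a + b * s)) (Real.exp (a + b * x) * b) x := by
    have h0 : HasDerivAt (fun s : ℝ => a + b * s) b x := by
      simpa using ((hasDerivAt_id x).const_mul b).const_add a
    exact h0.exp
  have hw' : HasDerivAt (fun s : ℝ => Real.exp s - 1) (Real.exp x) x :=
    (Real.hasDerivAt_exp x).sub_const 1
  have h2 : HasDerivAt (fun s : ℝ => (Real.exp s - 1) ^ k)
      ((k : ℝ) * (Real.exp x - 1) ^ (k - 1) * Real.exp x) x := by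
    exact (hasDerivAt_zpow k (Real.exp x - 1) (Or.inl hw)).comp x hw'
  have e2 : HasDerivAt (fun s : ℝ => Real.exp (2 * s)) (Real.exp (2 * x) * 2) x := by
    have h0 : HasDerivAt (fun s : ℝ => 2 * s) 2 x := by
      simpa using (hasDerivAt_id x).const_mul (2 : ℝ)
    exact h0.exp
  have e3 : HasDerivAt (fun s : ℝ => Real.exp (3 * s)) (Real.exp (3 * x) * 3) x := by
    have h0 : HasDerivAt (fun s : ℝ => 3 * s) 3 x := by
      simpa using (hasDerivAt_id x).const_mul (3 : ℝ)
    exact h0.exp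
  have h3 : HasDerivAt
      (fun s : ℝ => c0 + c1 * Real.exp s + c2 * Real.exp (2 * s) + c3 * Real.exp (3 * s))
      (c1 * Real.exp x + c2 * (Real.exp (2 * x) * 2) + c3 * (Real.exp (3 * x) * 3)) x := by
    have := (((hasDerivAt_const x c0).add ((Real.hasDerivAt_exp x).const_mul c1)).add
      (e2.const_mul c2)).add (e3.const_mul c3)
    exact this.congr_deriv (by ring)
  have hk : (Real.exp x - 1) ^ k = (Real.exp x - 1) ^ (k - 1) * (Real.exp x - 1) := by
    rw [← zpow_add_one₀ hw]; congr 1; ring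
  have := (h1.mul h2).mul h3
  refine this.congr_deriv ?_
  simp only [Pi.mul_apply]
  rw [hk]; ring

lemma qt_tau (φ : ℝ) (n : ℤ) (t x : ℝ) :
    qt (W9 φ n).tau t x = -(n : ℝ) * (W9 φ n).tau t x := by
  have h : HasDerivAt (fun s : ℝ => Real.exp (-(n : ℝ) * s + ((n : ℝ) - 1) * x))
      (Real.exp (-(n : ℝ) * t + ((n : ℝ) - 1) * x) * (-(n : ℝ))) t := by
    have h0 : HasDerivAt (fun s : ℝ => -(n : ℝ) * s + ((n : ℝ) - 1) * x) (-(n : ℝ)) t := by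
      simpa using ((hasDerivAt_id t).const_mul (-(n : ℝ))).add_const (((n : ℝ) - 1) * x)
    exact h0.exp
  have h2 : HasDerivAt (fun s : ℝ => (W9 φ n).tau s x)
      (Real.exp (-(n : ℝ) * t + ((n : ℝ) - 1) * x) * (-(n : ℝ)) *
        (Real.exp x - 1) ^ (-(n + 2) : ℤ) *
        ((-1 + S1 n) * (n : ℝ) + (2 * (n : ℝ) + 1) * Real.exp x
          - ((n : ℝ) + 2) * Real.exp (2 * x) + Real.exp (3 * x)
          + (Int.sign n : ℝ) * (φ / 2) * S2 n)) t :=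
    (h.mul_const _).mul_const _
  simp only [qt]
  rw [h2.deriv]
  simp only [W9]; ring

lemma qt_xi (φ : ℝ) (n : ℤ) (t x : ℝ) :
    qt (W9 φ n).xi t x = -(n : ℝ) * (W9 φ n).xi t x := by
  have h : HasDerivAt (fun s : ℝ => Real.exp (-(n : ℝ) * s + ((n : ℝ) - 1) * x))
      (Real.exp (-(n : ℝ) * t + ((n : ℝ) - 1) * x) * (-(n : ℝ))) t := by
    have h0 : HasDerivAt (fun s : ℝ => -(n : ℝ) * s + ((n : ℝ) - 1) * x) (-(n : ℝ)) t := by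
      simpa using ((hasDerivAt_id t).const_mul (-(n : ℝ))).add_const (((n : ℝ) - 1) * x)
    exact h0.exp
  have h2 : HasDerivAt (fun s : ℝ => (W9 φ n).xi s x)
      (Real.exp (-(n : ℝ) * t + ((n : ℝ) - 1) * x) * (-(n : ℝ)) *
        (Real.exp x - 1) ^ (-(n + 1) : ℤ) *
        (-((-1 + S1 n) * (n : ℝ)) - 2 * (n : ℝ) * Real.exp x
          + (n : ℝ) * Real.exp (2 * x)
          - (Int.sign n : ℝ) * (φ / 2) * S2 n)) t :=
    (h.mul_const _).mul_const _
  simp only [qt]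
  rw [h2.deriv]
  simp only [W9]; ring

lemma qx_tau (φ : ℝ) (n : ℤ) (t x : ℝ) (hw : Real.exp x - 1 ≠ 0) :
    qx (W9 φ n).tau t x
      = Real.exp (-(n : ℝ) * t + ((n : ℝ) - 1) * x) * (Real.exp x - 1) ^ (-(n + 3) : ℤ) *
        (((n : ℝ) - 1) * (Real.exp x - 1) *
            ((-1 + S1 n) * (n : ℝ) + (Int.sign n : ℝ) * (φ / 2) * S2 n
              + (2 * (n : ℝ) + 1) * Real.exp x + (-((n : ℝ) + 2)) * Real.exp (2 * x)
              + 1 * Real.exp (3 * x))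
          + ((-(n + 2) : ℤ) : ℝ) * Real.exp x *
            ((-1 + S1 n) * (n : ℝ) + (Int.sign n : ℝ) * (φ / 2) * S2 n
              + (2 * (n : ℝ) + 1) * Real.exp x + (-((n : ℝ) + 2)) * Real.exp (2 * x)
              + 1 * Real.exp (3 * x))
          + (Real.exp x - 1) *
            ((2 * (n : ℝ) + 1) * Real.exp x + 2 * (-((n : ℝ) + 2)) * Real.exp (2 * x)
              + 3 * 1 * Real.exp (3 * x))) := by
  have hd := hasDerivAt_shape (-(n : ℝ) * t) ((n : ℝ) - 1) (-(n + 2))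
    ((-1 + S1 n) * (n : ℝ) + (Int.sign n : ℝ) * (φ / 2) * S2 n)
    (2 * (n : ℝ) + 1) (-((n : ℝ) + 2)) 1 x hw
  rw [show (-(n + 2) - 1 : ℤ) = -(n + 3) by ring] at hd
  have hfun : (fun s => (W9 φ n).tau t s)
      = (fun s : ℝ => Real.exp (-(n : ℝ) * t + ((n : ℝ) - 1) * s) * (Real.exp s - 1) ^ (-(n + 2) : ℤ) *
        (((-1 + S1 n) * (n : ℝ) + (Int.sign n : ℝ) * (φ / 2) * S2 n)
          + (2 * (n : ℝ) + 1) * Real.exp s + (-((n : ℝ) + 2)) * Real.exp (2 * s)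
          + 1 * Real.exp (3 * s))) := by
    funext s; simp only [W9]; ring
  simp only [qx]
  rw [hfun, hd.deriv]

lemma qx_xi (φ : ℝ) (n : ℤ) (t x : ℝ) (hw : Real.exp x - 1 ≠ 0) :
    qx (W9 φ n).xi t x
      = Real.exp (-(n : ℝ) * t + ((n : ℝ) - 1) * x) * (Real.exp x - 1) ^ (-(n + 2) : ℤ) *
        (((n : ℝ) - 1) * (Real.exp x - 1) *
            ((-((-1 + S1 n) * (n : ℝ)) - (Int.sign n : ℝ) * (φ / 2) * S2 n)
              + (-(2 * (n : ℝ))) * Real.exp x + (n : ℝ) * Real.exp (2 * x)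
              + 0 * Real.exp (3 * x))
          + ((-(n + 1) : ℤ) : ℝ) * Real.exp x *
            ((-((-1 + S1 n) * (n : ℝ)) - (Int.sign n : ℝ) * (φ / 2) * S2 n)
              + (-(2 * (n : ℝ))) * Real.exp x + (n : ℝ) * Real.exp (2 * x)
              + 0 * Real.exp (3 * x))
          + (Real.exp x - 1) *
            ((-(2 * (n : ℝ))) * Real.exp x + 2 * (n : ℝ) * Real.exp (2 * x)
              + 3 * 0 * Real.exp (3 * x))) := by
  have hd := hasDerivAt_shape (-(n : ℝ) * t) ((n : ℝ) - 1) (-(n + 1))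
    (-((-1 + S1 n) * (n : ℝ)) - (Int.sign n : ℝ) * (φ / 2) * S2 n)
    (-(2 * (n : ℝ))) ((n : ℝ)) 0 x hw
  rw [show (-(n + 1) - 1 : ℤ) = -(n + 2) by ring] at hd
  have hfun : (fun s => (W9 φ n).xi t s)
      = (fun s : ℝ => Real.exp (-(n : ℝ) * t + ((n : ℝ) - 1) * s) * (Real.exp s - 1) ^ (-(n + 1) : ℤ) *
        ((-((-1 + S1 n) * (n : ℝ)) - (Int.sign n : ℝ) * (φ / 2) * S2 n)
          + (-(2 * (n : ℝ))) * Real.exp s + (n : ℝ) * Real.exp (2 * s)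
          + 0 * Real.exp (3 * s))) := by
    funext s; simp only [W9]; ring
  simp only [qx]
  rw [hfun, hd.deriv]


/-- Realization 𝔚₉ of the Witt algebra: on `Ω = {(t,x) : x ≠ 0}` one has
`[L m, L n] = (m - n) L (m + n)`. -/
theorem witt_realization_W9 (φ : ℝ) (m n : ℤ) (t x : ℝ) (hx : x ≠ 0) :
    (VF2.bracket (W9 φ m) (W9 φ n)).tau t x
      = ((m : ℝ) - (n : ℝ)) * (W9 φ (m + n)).tau t x ∧
    (VF2.bracket (W9 φ m) (W9 φ n)).xi t x
      = ((m : ℝ) - (n : ℝ)) * (W9 φ (m + n)).xi t x := by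
  have hw : Real.exp x - 1 ≠ 0 := by
    intro h
    have h1 : Real.exp x = Real.exp 0 := by rw [Real.exp_zero]; linarith [sub_eq_zero.mp h]
    exact hx (Real.exp_injective h1)
  have hE : Real.exp (-((m + n : ℤ) : ℝ) * t + (((m + n : ℤ) : ℝ) - 1) * x)
      = Real.exp (-(m : ℝ) * t + ((m : ℝ) - 1) * x) *
        Real.exp (-(n : ℝ) * t + ((n : ℝ) - 1) * x) * Real.exp x := by
    rw [← Real.exp_add, ← Real.exp_add]
    congr 1
    push_cast; ring
  have h2x : Real.exp (2 * x) = Real.exp x * Real.exp x := by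
    rw [two_mul, Real.exp_add]
  have h3x : Real.exp (3 * x) = Real.exp x * Real.exp x * Real.exp x := by
    rw [show (3 : ℝ) * x = x + x + x by ring, Real.exp_add, Real.exp_add]
  constructor
  · simp only [VF2.bracket, VF2.app]
    rw [qt_tau φ n t x, qt_tau φ m t x, qx_tau φ n t x hw, qx_tau φ m t x hw]
    simp only [W9]
    rw [S1_eq m, S1_eq n, S1_eq (m + n), S2_eq φ m, S2_eq φ n, S2_eq φ (m + n)]
    rw [hE, h2x, h3x]
    rw [zpow_split _ hw (-(m + 2)) (-(m + 3)) 1 (by omega),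
        zpow_split _ hw (-(m + 1)) (-(m + 3)) 2 (by omega),
        zpow_split _ hw (-(n + 2)) (-(n + 3)) 1 (by omega),
        zpow_split _ hw (-(n + 1)) (-(n + 3)) 2 (by omega),
        zpow_split2 _ hw (-(m + n + 2)) (-(m + 3)) (-(n + 3)) 4 (by omega)]
    push_cast
    ring
  · simp only [VF2.bracket, VF2.app]
    rw [qt_xi φ n t x, qt_xi φ m t x, qx_xi φ n t x hw, qx_xi φ m t x hw]
    simp only [W9]
    rw [S1_eq m, S1_eq n, S1_eq (m + n), S2_eq φ m, S2_eq φ n, S2_eq φ (m + n)]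
    rw [hE, h2x, h3x]
    rw [zpow_split _ hw (-(m + 1)) (-(m + 2)) 1 (by omega),
        zpow_split _ hw (-(n + 1)) (-(n + 2)) 1 (by omega),
        zpow_split2 _ hw (-(m + n + 1)) (-(m + 2)) (-(n + 2)) 3 (by omega)]
    push_cast
    ring
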